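/- Davenport's identity: let b_1,…,b_N, r_1,…,r_N ∈ ℝ³, let w_1,…,w_N ∈ ℝ, and define B = ∑_n w_n b_n r_nᵀ, σ = tr B, ρ = B + Bᵀ, z = ∑_n w_n (b_n × r_n), and the symmetric 4×4 matrix K with upper-left 3×3 block ρ − σI, upper-right column z, lower-left row zᵀ, and lower-right entry σ. Then for every unit quaternion q (identified with the vector (q_v, q_s) ∈ ℝ⁴, vector part first), ∑_n w_n ⟨b_n, A(q) r_n⟩ = qᵀ K q, where A(q) = (q_s² − ‖q_v‖²) I + 2 q_v q_vᵀ − 2 q_s [q_v×]. -/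
import Mathlib


open Matrix

/-- The skew-symmetric cross-product matrix `[v×]` of `v ∈ ℝ³`. -/
def crossMat (v : Fin 3 → ℝ) : Matrix (Fin 3) (Fin 3) ℝ :=
  !![0, -v 2, v 1; v 2, 0, -v 0; -v 1, v 0, 0]

/-- The rotation matrix `A(q) = (qs² − ‖qv‖²) I + 2 qv qvᵀ − 2 qs [qv×]` associated to
the quaternion with vector part `qv` and scalar part `qs`. -/
def quatRotMat (qv : Fin 3 → ℝ) (qs : ℝ) : Matrix (Fin 3) (Fin 3) ℝ :=
  (qs ^ 2 - qv ⬝ᵥ qv) • (1 : Matrix (Fin 3) (Fin 3) ℝ)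
    + (2 : ℝ) • vecMulVec qv qv - (2 * qs) • crossMat qv

/-- The attitude profile matrix `B = ∑ wₙ bₙ rₙᵀ`. -/
noncomputable def profileB {N : ℕ} (w : Fin N → ℝ) (b r : Fin N → Fin 3 → ℝ) :
    Matrix (Fin 3) (Fin 3) ℝ :=
  ∑ n, w n • vecMulVec (b n) (r n)

/-- Davenport's `K` matrix: the symmetric 4×4 matrix with upper-left 3×3 block
`ρ − σI`, upper-right column `z`, lower-left row `zᵀ` and lower-right entry `σ`,
where `σ = tr B`, `ρ = B + Bᵀ` and `z = ∑ wₙ (bₙ × rₙ)`. The index `Fin 3 ⊕ Unit`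
encodes the vector part (first) and scalar part (last) of a quaternion. -/
noncomputable def davenportK {N : ℕ} (w : Fin N → ℝ) (b r : Fin N → Fin 3 → ℝ) :
    Matrix (Fin 3 ⊕ Unit) (Fin 3 ⊕ Unit) ℝ :=
  let B := profileB w b r
  let σ : ℝ := B.trace
  let ρ := B + Bᵀ
  let z : Fin 3 → ℝ := ∑ n, w n • (crossProduct (b n) (r n))
  fromBlocks (ρ - σ • 1) (Matrix.of fun i _ => z i) (Matrix.of fun _ j => z j)
    (Matrix.of fun _ _ => σ)

noncomputable def Kone (w0 : ℝ) (b0 r0 : Fin 3 → ℝ) :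
    Matrix (Fin 3 ⊕ Unit) (Fin 3 ⊕ Unit) ℝ :=
  fromBlocks (w0 • vecMulVec b0 r0 + w0 • vecMulVec r0 b0 - (w0 * (b0 ⬝ᵥ r0)) • 1)
    (Matrix.of fun i _ => w0 * crossProduct b0 r0 i)
    (Matrix.of fun _ j => w0 * crossProduct b0 r0 j)
    (Matrix.of fun _ _ => w0 * (b0 ⬝ᵥ r0))

lemma davenportK_eq_sum {N : ℕ} (w : Fin N → ℝ) (b r : Fin N → Fin 3 → ℝ) :
    davenportK w b r = ∑ n, Kone (w n) (b n) (r n) := by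
  ext i j
  simp only [davenportK, Kone, profileB, Finset.sum_apply]
  cases i with
  | inl i => cases j with
    | inl j =>
      simp only [fromBlocks, Matrix.trace, Matrix.diag, Finset.sum_apply,
        Matrix.sum_apply, vecMulVec_apply, Matrix.one_apply, dotProduct,
        Fin.sum_univ_three, Matrix.sub_apply, Matrix.add_apply,
        Matrix.smul_apply, Matrix.transpose_apply, Sum.elim_inl, Matrix.of_apply,
        smul_eq_mul]
      simp only [add_mul, Finset.sum_mul, ← Finset.sum_add_distrib,
        ← Finset.sum_sub_distrib]
      exact Finset.sum_congr rfl fun n _ => by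
        by_cases h : i = j <;> simp [h] <;> ring_nf <;> simp
    | inr j =>
      simp [fromBlocks, Finset.sum_apply, Matrix.sum_apply]
  | inr i => cases j with
    | inl j =>
      simp [fromBlocks, Finset.sum_apply, Matrix.sum_apply]
    | inr j =>
      simp [fromBlocks, Matrix.trace, Matrix.diag, Finset.sum_apply,
        Matrix.sum_apply, vecMulVec_apply, dotProduct, Fin.sum_univ_three]
      rw [← Finset.sum_add_distrib, ← Finset.sum_add_distrib]
      exact Finset.sum_congr rfl fun n _ => by ring

/-- Davenport's identity: for every unit quaternion `q = (qv, qs)` (written as a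
vector in `ℝ⁴`, vector part first), `∑ wₙ ⟨bₙ, A(q) rₙ⟩ = qᵀ K q`. -/
theorem davenport_identity {N : ℕ} (w : Fin N → ℝ) (b r : Fin N → Fin 3 → ℝ)
    (qv : Fin 3 → ℝ) (qs : ℝ) (hq : qs ^ 2 + qv ⬝ᵥ qv = 1) :
    ∑ n, w n * (b n ⬝ᵥ (quatRotMat qv qs).mulVec (r n)) =
      (Sum.elim qv fun _ => qs) ⬝ᵥ
        (davenportK w b r).mulVec (Sum.elim qv fun _ => qs) := by
  rw [davenportK_eq_sum]
  have hlin : ∀ u v : Fin 3 ⊕ Unit → ℝ,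
      u ⬝ᵥ (∑ n, Kone (w n) (b n) (r n)) *ᵥ v
        = ∑ n, u ⬝ᵥ (Kone (w n) (b n) (r n)) *ᵥ v := by
    intro u v
    have h1 : ((∑ n, Kone (w n) (b n) (r n)) *ᵥ v)
        = ∑ n, (Kone (w n) (b n) (r n)) *ᵥ v := by
      ext i
      simp only [mulVec, dotProduct, Matrix.sum_apply, Finset.sum_mul,
        Finset.sum_apply]
      rw [Finset.sum_comm]
    rw [h1]
    simp only [dotProduct, Finset.sum_apply, Finset.mul_sum]
    rw [Finset.sum_comm]
  rw [hlin]
  refine Finset.sum_congr rfl fun n _ => ?_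
  simp [Kone, quatRotMat, crossMat, mulVec, dotProduct, fromBlocks,
    Fintype.sum_sum_type, Fin.sum_univ_three, vecMulVec_apply, Matrix.one_apply,
    crossProduct, Matrix.sub_apply, Matrix.add_apply, Matrix.smul_apply]
  ring
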